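/- The weight φ* = min( λ / ( (λ/η)e^{−u} + (ηπ²/β̂²)e^{u} ), 2η/(e^{u} + e^{−u}) ) is a global minimizer over nonnegative weights of the worst-case objective: φ* ≥ 0 and for every φ ≥ 0, sup_{β ∈ [b⁻, b⁺]} T(φ*, β) ≤ sup_{β ∈ [b⁻, b⁺]} T(φ, β), where b⁻ = (β̂/η)e^{−u} and b⁺ = (β̂/η)e^{u}. -/

import Mathlib

/-- The bias-variance objective `T(φ, β) = λ(βφ/β̂ − 1)² + (π²/β̂²)φ²`. -/
noncomputable def T (lam bhat pi : ℝ) (φ β : ℝ) : ℝ :=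
  lam * (β * φ / bhat - 1) ^ 2 + pi ^ 2 / bhat ^ 2 * φ ^ 2


private lemma aux_min (lam c η a φ1 φ : ℝ)
    (hK : φ1 * (lam * a ^ 2 + c * η ^ 2) = lam * η * a)
    (hKpos : 0 ≤ lam * a ^ 2 + c * η ^ 2) :
    lam * (a * φ1 - η) ^ 2 + c * η ^ 2 * φ1 ^ 2
      ≤ lam * (a * φ - η) ^ 2 + c * η ^ 2 * φ ^ 2 := by
  have hKφ : 2 * (φ - φ1) * (φ1 * (lam * a ^ 2 + c * η ^ 2))
      = 2 * (φ - φ1) * (lam * η * a) := by rw [hK]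
  nlinarith [hKφ, mul_nonneg hKpos (sq_nonneg (φ - φ1))]

private lemma aux_dec (lam c η a φ1 φ2 φ : ℝ)
    (hK : φ1 * (lam * a ^ 2 + c * η ^ 2) = lam * η * a)
    (hKpos : 0 ≤ lam * a ^ 2 + c * η ^ 2)
    (hle : φ ≤ φ2) (h21 : φ2 ≤ φ1) :
    lam * (a * φ2 - η) ^ 2 + c * η ^ 2 * φ2 ^ 2
      ≤ lam * (a * φ - η) ^ 2 + c * η ^ 2 * φ ^ 2 := by
  have hKφ : 2 * (φ2 - φ) * (φ1 * (lam * a ^ 2 + c * η ^ 2))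
      = 2 * (φ2 - φ) * (lam * η * a) := by rw [hK]
  nlinarith [hKφ, mul_nonneg (mul_nonneg hKpos (by linarith : (0:ℝ) ≤ φ2 - φ))
    (by linarith : (0:ℝ) ≤ 2 * φ1 - φ - φ2)]

private lemma aux_inc (lam c η A φ2 φ : ℝ)
    (hM : lam * η * A ≤ φ2 * (lam * A ^ 2 + c * η ^ 2))
    (hMpos : 0 ≤ lam * A ^ 2 + c * η ^ 2)
    (hge : φ2 ≤ φ) :
    lam * (A * φ2 - η) ^ 2 + c * η ^ 2 * φ2 ^ 2
      ≤ lam * (A * φ - η) ^ 2 + c * η ^ 2 * φ ^ 2 := by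
  nlinarith [mul_nonneg (sub_nonneg.mpr hge) (sub_nonneg.mpr hM),
    mul_nonneg hMpos (sq_nonneg (φ - φ2))]

private lemma aux_flip (lam c η a A φ1 : ℝ)
    (hlam : 0 ≤ lam) (hφ1 : 0 ≤ φ1) (haA : a ≤ A) (h2η : φ1 * (A + a) ≤ 2 * η) :
    lam * (A * φ1 - η) ^ 2 + c * η ^ 2 * φ1 ^ 2
      ≤ lam * (a * φ1 - η) ^ 2 + c * η ^ 2 * φ1 ^ 2 := by
  nlinarith [mul_nonneg (mul_nonneg (mul_nonneg hlam hφ1)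
    (sub_nonneg.mpr haA)) (by linarith : (0:ℝ) ≤ 2 * η - φ1 * (A + a))]

set_option maxHeartbeats 1000000 in
/-- The weight `φ* = min( λ / ((λ/η)e^{−u} + (ηπ²/β̂²)e^{u}), 2η/(e^{u} + e^{−u}) )` is a
nonnegative global minimizer, over nonnegative weights, of the worst-case objective
`sup_{β ∈ [b⁻, b⁺]} T(φ, β)`, where `b⁻ = (β̂/η)e^{−u}` and `b⁺ = (β̂/η)e^{u}`. -/
theorem stmt_6 (lam bhat pi η u : ℝ) (hlam : 0 < lam) (hbhat : 0 < bhat) (hpi : 0 ≤ pi)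
    (hη : 0 < η) (hu : 0 ≤ u) :
    0 ≤ min (lam / (lam / η * Real.exp (-u) + η * pi ^ 2 / bhat ^ 2 * Real.exp u))
          (2 * η / (Real.exp u + Real.exp (-u))) ∧
    ∀ φ : ℝ, 0 ≤ φ →
      sSup ((fun β => T lam bhat pi
          (min (lam / (lam / η * Real.exp (-u) + η * pi ^ 2 / bhat ^ 2 * Real.exp u))
            (2 * η / (Real.exp u + Real.exp (-u)))) β) ''
          Set.Icc (bhat / η * Real.exp (-u)) (bhat / η * Real.exp u))
        ≤ sSup ((fun β => T lam bhat pi φ β) ''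
            Set.Icc (bhat / η * Real.exp (-u)) (bhat / η * Real.exp u)) := by
  have ha : (0:ℝ) < Real.exp (-u) := Real.exp_pos _
  have hA : (0:ℝ) < Real.exp u := Real.exp_pos _
  set a := Real.exp (-u) with ha_def
  set A := Real.exp u with hA_def
  have haA : a ≤ A := Real.exp_le_exp.2 (by linarith)
  have hA1 : (1:ℝ) ≤ A := Real.one_le_exp hu
  have haA1 : a * A = 1 := by rw [ha_def, hA_def, ← Real.exp_add]; simp
  have hD : (0:ℝ) < lam / η * a + η * pi ^ 2 / bhat ^ 2 * A := by positivity
  set φ1 := lam / (lam / η * a + η * pi ^ 2 / bhat ^ 2 * A) with hφ1_def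
  set φ2 := 2 * η / (A + a) with hφ2_def
  have hφ1pos : 0 < φ1 := div_pos hlam hD
  have hφ2pos : 0 < φ2 := by positivity
  have hφ1eq : φ1 * (lam / η * a + η * pi ^ 2 / bhat ^ 2 * A) = lam :=
    div_mul_cancel₀ _ hD.ne'
  have hφ2eq : φ2 * (A + a) = 2 * η :=
    div_mul_cancel₀ _ (by positivity : (0:ℝ) < A + a).ne'
  -- key quadratic relation: φ1 is the argmin of the left-endpoint objective
  have h2 : (lam / η * a + η * pi ^ 2 / bhat ^ 2 * A) * (η * a)
      = lam * a ^ 2 + pi ^ 2 / bhat ^ 2 * η ^ 2 := by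
    field_simp
    linear_combination (pi ^ 2 * η ^ 2) * haA1
  have hK : φ1 * (lam * a ^ 2 + pi ^ 2 / bhat ^ 2 * η ^ 2) = lam * η * a := by
    calc φ1 * (lam * a ^ 2 + pi ^ 2 / bhat ^ 2 * η ^ 2)
        = φ1 * ((lam / η * a + η * pi ^ 2 / bhat ^ 2 * A) * (η * a)) := by rw [h2]
      _ = lam * (η * a) := by rw [← mul_assoc, hφ1eq]
      _ = lam * η * a := by ring
  have hKpos : (0:ℝ) ≤ lam * a ^ 2 + pi ^ 2 / bhat ^ 2 * η ^ 2 := by positivity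
  have hMpos : (0:ℝ) ≤ lam * A ^ 2 + pi ^ 2 / bhat ^ 2 * η ^ 2 := by positivity
  -- φ2 is at or beyond the argmin of the right-endpoint objective
  have hMφ2 : lam * η * A ≤ φ2 * (lam * A ^ 2 + pi ^ 2 / bhat ^ 2 * η ^ 2) := by
    rw [hφ2_def, div_mul_eq_mul_div, le_div_iff₀ (by positivity : (0:ℝ) < A + a)]
    have haA1' : lam * η * (a * A) = lam * η := by rw [haA1, mul_one]
    have h1 : (0:ℝ) ≤ lam * η * (A ^ 2 - 1) :=
      mul_nonneg (mul_pos hlam hη).le (by nlinarith)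
    have h2' : (0:ℝ) ≤ pi ^ 2 / bhat ^ 2 * η ^ 3 := by positivity
    nlinarith [haA1', h1, h2']
  set φs := min φ1 φ2 with hφs_def
  have hφsnn : 0 ≤ φs := le_min hφ1pos.le hφ2pos.le
  set lo := bhat / η * a with hlo_def
  set hi := bhat / η * A with hhi_def
  have hlohi : lo ≤ hi := mul_le_mul_of_nonneg_left haA (by positivity)
  have hmemlo : lo ∈ Set.Icc lo hi := Set.left_mem_Icc.mpr hlohi
  have hmemhi : hi ∈ Set.Icc lo hi := Set.right_mem_Icc.mpr hlohi
  -- T rewritten without the β̂ division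
  have hT : ∀ φ x : ℝ, T lam bhat pi φ (bhat / η * x)
      = (lam * (x * φ - η) ^ 2 + pi ^ 2 / bhat ^ 2 * η ^ 2 * φ ^ 2) / η ^ 2 := by
    intro φ x
    unfold T
    field_simp
  have hη2 : (0:ℝ) < η ^ 2 := by positivity
  -- sup over the interval is the max over the endpoints
  have Tle : ∀ φ : ℝ, 0 ≤ φ → ∀ β ∈ Set.Icc lo hi,
      T lam bhat pi φ β ≤ max (T lam bhat pi φ lo) (T lam bhat pi φ hi) := by
    intro φ hφ β hβ
    obtain ⟨h1, h2'⟩ := hβ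
    have hx1 : lo * φ / bhat ≤ β * φ / bhat := by gcongr
    have hx2 : β * φ / bhat ≤ hi * φ / bhat := by gcongr
    rcases le_total (β * φ / bhat) 1 with h | h
    · apply le_max_of_le_left
      simp only [T]
      have hsq : (β * φ / bhat - 1) ^ 2 ≤ (lo * φ / bhat - 1) ^ 2 := by nlinarith
      nlinarith [mul_le_mul_of_nonneg_left hsq hlam.le]
    · apply le_max_of_le_right
      simp only [T]
      have hsq : (β * φ / bhat - 1) ^ 2 ≤ (hi * φ / bhat - 1) ^ 2 := by nlinarith
      nlinarith [mul_le_mul_of_nonneg_left hsq hlam.le]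
  have himg_ne : ∀ φ : ℝ, ((fun β => T lam bhat pi φ β) '' Set.Icc lo hi).Nonempty :=
    fun φ => ⟨_, ⟨lo, hmemlo, rfl⟩⟩
  have hbdd : ∀ φ : ℝ, 0 ≤ φ → BddAbove ((fun β => T lam bhat pi φ β) '' Set.Icc lo hi) := by
    intro φ hφ
    refine ⟨max (T lam bhat pi φ lo) (T lam bhat pi φ hi), ?_⟩
    rintro y ⟨β, hβ, rfl⟩
    exact Tle φ hφ β hβ
  have sup_eq : ∀ φ : ℝ, 0 ≤ φ →
      sSup ((fun β => T lam bhat pi φ β) '' Set.Icc lo hi)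
        = max (T lam bhat pi φ lo) (T lam bhat pi φ hi) := by
    intro φ hφ
    apply le_antisymm
    · refine csSup_le (himg_ne φ) ?_
      rintro y ⟨β, hβ, rfl⟩
      exact Tle φ hφ β hβ
    · exact max_le (le_csSup (hbdd φ hφ) ⟨lo, hmemlo, rfl⟩)
        (le_csSup (hbdd φ hφ) ⟨hi, hmemhi, rfl⟩)
  -- core minimax inequality
  have key : ∀ φ : ℝ, 0 ≤ φ →
      max (T lam bhat pi φs lo) (T lam bhat pi φs hi)
        ≤ max (T lam bhat pi φ lo) (T lam bhat pi φ hi) := by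
    intro φ hφ
    rcases le_or_gt φ1 φ2 with h12 | h21
    · have hφs1 : φs = φ1 := min_eq_left h12
      rw [hφs1]
      have h2η : φ1 * (A + a) ≤ 2 * η := by
        calc φ1 * (A + a) ≤ φ2 * (A + a) :=
              mul_le_mul_of_nonneg_right h12 (by positivity)
          _ = 2 * η := hφ2eq
      have hcmp1 : T lam bhat pi φ1 hi ≤ T lam bhat pi φ1 lo := by
        rw [hlo_def, hhi_def, hT, hT]
        apply (div_le_div_iff_of_pos_right hη2).mpr
        exact aux_flip lam (pi ^ 2 / bhat ^ 2) η a A φ1 hlam.le hφ1pos.le haA h2η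
      have hcmp2 : T lam bhat pi φ1 lo ≤ T lam bhat pi φ lo := by
        rw [hlo_def, hT, hT]
        apply (div_le_div_iff_of_pos_right hη2).mpr
        exact aux_min lam (pi ^ 2 / bhat ^ 2) η a φ1 φ hK hKpos
      calc max (T lam bhat pi φ1 lo) (T lam bhat pi φ1 hi)
          = T lam bhat pi φ1 lo := max_eq_left hcmp1
        _ ≤ T lam bhat pi φ lo := hcmp2
        _ ≤ max (T lam bhat pi φ lo) (T lam bhat pi φ hi) := le_max_left _ _
    · have hφs2 : φs = φ2 := min_eq_right h21.le
      rw [hφs2]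
      have heq : T lam bhat pi φ2 lo = T lam bhat pi φ2 hi := by
        rw [hlo_def, hhi_def, hT, hT]
        have hnum : lam * (a * φ2 - η) ^ 2 + pi ^ 2 / bhat ^ 2 * η ^ 2 * φ2 ^ 2
            = lam * (A * φ2 - η) ^ 2 + pi ^ 2 / bhat ^ 2 * η ^ 2 * φ2 ^ 2 := by
          linear_combination (lam * (a - A) * φ2) * hφ2eq
        rw [hnum]
      rcases le_total φ φ2 with hle | hge
      · have hcmp : T lam bhat pi φ2 lo ≤ T lam bhat pi φ lo := by
          rw [hlo_def, hT, hT]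
          apply (div_le_div_iff_of_pos_right hη2).mpr
          exact aux_dec lam (pi ^ 2 / bhat ^ 2) η a φ1 φ2 φ hK hKpos hle h21.le
        rw [max_eq_left heq.ge]
        exact le_max_of_le_left hcmp
      · have hcmp : T lam bhat pi φ2 hi ≤ T lam bhat pi φ hi := by
          rw [hhi_def, hT, hT]
          apply (div_le_div_iff_of_pos_right hη2).mpr
          exact aux_inc lam (pi ^ 2 / bhat ^ 2) η A φ2 φ hMφ2 hMpos hge
        rw [max_eq_right heq.le]
        exact le_max_of_le_right hcmp
  refine ⟨hφsnn, ?_⟩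
  intro φ hφ
  rw [sup_eq _ hφsnn, sup_eq _ hφ]
  exact key φ hφ
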